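/- Let A = {1,…,3p}, A_1,…,A_n be 3-element subsets of A, y_i the characteristic vector of A_i, and y_{n+1} = (−1,…,−1). If C ⊆ {y_1,…,y_{n+1}} is nonempty and ∑_{y∈C} y = 0, then y_{n+1} ∈ C and the sets A_i with y_i ∈ C form an exact cover of A by p sets. -/

import Mathlib

theorem stmt_5 (p n : ℕ) (A : Fin n → Finset (Fin (3 * p)))
    (hA : ∀ i, (A i).card = 3)
    (y : Fin (n + 1) → EuclideanSpace ℝ (Fin (3 * p)))
    (hchar : ∀ (i : Fin n) (j : Fin (3 * p)), y i.castSucc j = if j ∈ A i then 1 else 0)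
    (hlast : ∀ j, y (Fin.last n) j = -1)
    (C : Finset (Fin (n + 1))) (hCne : C.Nonempty)
    (hsum : (∑ i ∈ C, y i) = 0) :
    Fin.last n ∈ C ∧
      (Finset.univ.filter (fun i : Fin n => i.castSucc ∈ C)).card = p ∧
      (∀ i ∈ Finset.univ.filter (fun i : Fin n => i.castSucc ∈ C),
        ∀ i' ∈ Finset.univ.filter (fun i : Fin n => i.castSucc ∈ C),
          i ≠ i' → Disjoint (A i) (A i')) ∧
      (Finset.univ.filter (fun i : Fin n => i.castSucc ∈ C)).biUnion A = Finset.univ := by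
  classical
  set S : Finset (Fin n) := Finset.univ.filter (fun i : Fin n => i.castSucc ∈ C) with hSdef
  have hkey : ∀ j : Fin (3 * p), (∑ i ∈ C, y i j) = 0 := by
    intro j
    have := congrArg (fun v => v j) hsum
    simpa using this
  -- decompose the sum over C
  have hfilt : C.filter (fun a => a ≠ Fin.last n) = S.image Fin.castSucc := by
    ext a
    simp only [Finset.mem_filter, Finset.mem_image, hSdef, Finset.mem_univ, true_and]
    constructor
    · rintro ⟨haC, hne⟩
      obtain ⟨i, rfl⟩ := Fin.exists_castSucc_eq.mpr hne
      exact ⟨i, haC, rfl⟩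
    · rintro ⟨i, hi, rfl⟩
      exact ⟨hi, Fin.castSucc_lt_last i |>.ne⟩
  have hdecomp : ∀ j : Fin (3 * p),
      (∑ i ∈ C, y i j) =
      (∑ i ∈ S, (if j ∈ A i then (1:ℝ) else 0)) + (if Fin.last n ∈ C then (-1:ℝ) else 0) := by
    intro j
    rw [← Finset.sum_filter_add_sum_filter_not C (fun a => a ≠ Fin.last n)]
    congr 1
    · rw [hfilt, Finset.sum_image (fun a _ b _ h => Fin.castSucc_injective n h)]
      exact Finset.sum_congr rfl fun i _ => hchar i j
    · simp only [not_ne_iff]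
      by_cases h : Fin.last n ∈ C
      · rw [Finset.filter_eq' , if_pos h]
        simp [hlast, h]
      · rw [Finset.filter_eq', if_neg h]
        simp [h]
  have hlastC : Fin.last n ∈ C := by
    by_contra h
    obtain ⟨a, ha⟩ := hCne
    have hane : a ≠ Fin.last n := fun e => h (e ▸ ha)
    obtain ⟨i, rfl⟩ := Fin.exists_castSucc_eq.mpr hane
    have hiS : i ∈ S := by simp [hSdef, ha]
    obtain ⟨j, hj⟩ := Finset.card_pos.mp (by rw [hA i]; norm_num)
    have h0 := hkey j
    rw [hdecomp j, if_neg h, add_zero] at h0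
    have hpos : (0:ℝ) < ∑ i ∈ S, (if j ∈ A i then (1:ℝ) else 0) := by
      apply Finset.sum_pos' (fun i _ => by positivity)
      exact ⟨i, hiS, by simp [hj]⟩
    linarith
  have hone : ∀ j : Fin (3 * p), (S.filter (fun i => j ∈ A i)).card = 1 := by
    intro j
    have h0 := hkey j
    rw [hdecomp j, if_pos hlastC] at h0
    have : (∑ i ∈ S, (if j ∈ A i then (1:ℝ) else 0)) = 1 := by linarith
    rw [Finset.sum_boole] at this
    exact_mod_cast this
  refine ⟨hlastC, ?_, ?_, ?_⟩
  · -- cardinality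
    have h1 : ∑ i ∈ S, (A i).card = 3 * p := by
      calc ∑ i ∈ S, (A i).card
          = ∑ i ∈ S, ∑ j : Fin (3 * p), (if j ∈ A i then 1 else 0) := by
            refine Finset.sum_congr rfl fun i _ => ?_
            rw [Finset.sum_boole, Nat.cast_id]
            congr 1
            simp
        _ = ∑ j : Fin (3 * p), ∑ i ∈ S, (if j ∈ A i then 1 else 0) := Finset.sum_comm
        _ = ∑ j : Fin (3 * p), 1 := by
            refine Finset.sum_congr rfl fun j _ => ?_
            rw [Finset.sum_boole, hone j]
            simp
        _ = 3 * p := by simp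
    have h2 : ∑ i ∈ S, (A i).card = 3 * S.card := by
      rw [Finset.sum_congr rfl fun i _ => hA i, Finset.sum_const, smul_eq_mul, Nat.mul_comm]
    omega
  · intro i hi i' hi' hne
    rw [Finset.disjoint_left]
    intro j hj hj'
    have : ({i, i'} : Finset (Fin n)) ⊆ S.filter (fun i => j ∈ A i) := by
      intro a ha
      simp only [Finset.mem_insert, Finset.mem_singleton] at ha
      rcases ha with rfl | rfl <;> simp [Finset.mem_filter, hi, hi', hj, hj']
    have hc := Finset.card_le_card this
    rw [hone j, Finset.card_insert_of_notMem (by simpa), Finset.card_singleton] at hc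
    omega
  · ext j
    simp only [Finset.mem_biUnion, Finset.mem_univ, iff_true]
    have := hone j
    obtain ⟨i, hi⟩ := Finset.card_pos.mp (by rw [this]; exact Nat.one_pos)
    simp only [Finset.mem_filter] at hi
    exact ⟨i, hi.1, hi.2⟩
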